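/- Let Ω ⊂ ℝⁿ be bounded open with inradius R = sup_{x∈Ω} δ(x), where δ(x) = dist(x, ℝⁿ\Ω). Let Γ = {x ∈ Ω : δ(x) = R} be the high ridge and ρ(x) = dist(x, Γ). For 0 < α ≤ 1 define u(x) = δ(x)^α / (δ(x)^α + ρ(x)^α) on Ω. Then for every x ∈ Ω \ Γ and every y ∈ ℝⁿ (with u extended by 0 outside Ω), (u(y) - u(x))/|y - x|^α ≤ 1/(δ(x)^α + ρ(x)^α), with equality attained when y is a closest point of Γ to x. -/

import Mathlib

open scoped Classical

lemma rpow_subadd {s t p : ℝ} (hs : 0 ≤ s) (ht : 0 ≤ t) (hp : 0 ≤ p) (hp1 : p ≤ 1) :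
    (s + t) ^ p ≤ s ^ p + t ^ p := by
  lift s to NNReal using hs
  lift t to NNReal using ht
  exact_mod_cast NNReal.rpow_add_le_add_rpow s t hp hp1

/-- Representation formula estimate: with `δ` the distance to the complement of `Ω`, `R` the
inradius, `Γ` the high ridge, `ρ` the distance to `Γ`, and
`u = δ^α/(δ^α + ρ^α)` on `Ω` (extended by `0` outside), for every `x ∈ Ω \ Γ` and every `y`:
`(u(y) - u(x))/|y - x|^α ≤ 1/(δ(x)^α + ρ(x)^α)`, with equality when `y` is a closest
point of `Γ` to `x`. -/
theorem stmt_14 (n : ℕ) (Ω : Set (EuclideanSpace ℝ (Fin n)))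
    (hΩo : IsOpen Ω) (hΩb : Bornology.IsBounded Ω) (hΩne : Ω.Nonempty)
    (α : ℝ) (hα0 : 0 < α) (hα1 : α ≤ 1)
    (δ : EuclideanSpace ℝ (Fin n) → ℝ) (hδ : δ = fun x => Metric.infDist x Ωᶜ)
    (R : ℝ) (hR : R = sSup (δ '' Ω))
    (Γ : Set (EuclideanSpace ℝ (Fin n))) (hΓ : Γ = {x ∈ Ω | δ x = R})
    (hΓne : Γ.Nonempty)
    (ρ : EuclideanSpace ℝ (Fin n) → ℝ) (hρ : ρ = fun x => Metric.infDist x Γ)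
    (u : EuclideanSpace ℝ (Fin n) → ℝ)
    (hu : u = fun x => if x ∈ Ω then δ x ^ α / (δ x ^ α + ρ x ^ α) else 0) :
    ∀ x ∈ Ω \ Γ,
      (∀ y, (u y - u x) / dist y x ^ α ≤ 1 / (δ x ^ α + ρ x ^ α)) ∧
      (∀ y ∈ Γ, dist x y = ρ x →
        (u y - u x) / dist y x ^ α = 1 / (δ x ^ α + ρ x ^ α)) := by
  rintro x ⟨hxΩ, hxΓ⟩
  -- Rule out the degenerate case `Ωᶜ = ∅`.
  rcases Set.eq_empty_or_nonempty Ωᶜ with hc | hc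
  · exfalso
    have hδ0 : ∀ a, δ a = 0 := by
      intro a; rw [hδ]; simp [hc, Metric.infDist_empty]
    have hR0 : R = 0 := by
      have : δ '' Ω = {0} := by
        apply Set.eq_singleton_iff_nonempty_unique_mem.2
        exact ⟨(hΩne.image δ), by rintro y ⟨a, _, rfl⟩; exact hδ0 a⟩
      rw [hR, this, csSup_singleton]
    exact hxΓ (by rw [hΓ]; exact ⟨hxΩ, by rw [hδ0 x, hR0]⟩)
  -- Basic facts about `δ`.
  have hδnn : ∀ a, 0 ≤ δ a := by intro a; rw [hδ]; exact Metric.infDist_nonneg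
  have hδlip : ∀ a b, δ a ≤ δ b + dist a b := by
    intro a b; rw [hδ]; exact Metric.infDist_le_infDist_add_dist
  have hxO : x ∉ Ωᶜ := fun h => h hxΩ
  have hδx : 0 < δ x := by
    rw [hδ]; exact (hΩo.isClosed_compl.notMem_iff_infDist_pos hc).1 hxO
  obtain ⟨z, hz⟩ := hc
  obtain ⟨r, hr⟩ := hΩb.subset_closedBall z
  have hbdd : BddAbove (δ '' Ω) := by
    refine ⟨r, ?_⟩
    rintro w ⟨a, ha, rfl⟩
    rw [hδ]
    exact (Metric.infDist_le_dist_of_mem hz).trans (by simpa using hr ha)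
  have hδR : ∀ a ∈ Ω, δ a ≤ R := fun a ha => hR ▸ le_csSup hbdd ⟨a, ha, rfl⟩
  have hR0 : 0 < R := lt_of_lt_of_le hδx (hδR x hxΩ)
  -- `Γ` is closed.
  have hΓeq : Γ = δ ⁻¹' {R} := by
    ext a
    rw [hΓ]
    constructor
    · rintro ⟨_, h⟩; exact h
    · intro h
      have haR : δ a = R := h
      have : a ∈ Ω := by
        by_contra hnot
        have : δ a = 0 := by rw [hδ]; exact Metric.infDist_zero_of_mem hnot
        rw [haR] at this; exact absurd this hR0.ne'
      exact ⟨this, haR⟩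
  have hδcont : Continuous δ := by rw [hδ]; exact Metric.continuous_infDist_pt _
  have hΓcl : IsClosed Γ := hΓeq ▸ isClosed_singleton.preimage hδcont
  have hρnn : ∀ a, 0 ≤ ρ a := by intro a; rw [hρ]; exact Metric.infDist_nonneg
  have hρlip : ∀ a b, ρ a ≤ ρ b + dist a b := by
    intro a b; rw [hρ]; exact Metric.infDist_le_infDist_add_dist
  have hρx : 0 < ρ x := by
    rw [hρ]; exact (hΓcl.notMem_iff_infDist_pos hΓne).1 hxΓ
  set A := δ x ^ α with hAdef
  set B := ρ x ^ α with hBdef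
  have hA : 0 < A := Real.rpow_pos_of_pos hδx α
  have hB : 0 < B := Real.rpow_pos_of_pos hρx α
  have hAB : 0 < A + B := by linarith
  have hux : u x = A / (A + B) := by rw [hu]; simp [hxΩ, A, B]
  constructor
  · intro y
    by_cases hyx : y = x
    · subst hyx
      rw [dist_self, Real.zero_rpow hα0.ne', div_zero]
      positivity
    have hd : 0 < dist y x := dist_pos.2 hyx
    have hD : 0 < dist y x ^ α := Real.rpow_pos_of_pos hd α
    set D := dist y x ^ α with hDdef
    by_cases hyΩ : y ∈ Ω
    · have hyO : y ∉ Ωᶜ := fun h => h hyΩ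
      have hδy : 0 < δ y := by
        rw [hδ]; exact (hΩo.isClosed_compl.notMem_iff_infDist_pos ⟨z, hz⟩).1 hyO
      set a := δ y ^ α with hadef
      set b := ρ y ^ α with hbdef
      have ha0 : 0 < a := Real.rpow_pos_of_pos hδy α
      have hb0 : 0 ≤ b := Real.rpow_nonneg (hρnn y) α
      have hab : 0 < a + b := by linarith
      have ha : a ≤ A + D := by
        calc a ≤ (δ x + dist y x) ^ α :=
              Real.rpow_le_rpow (hδnn y) (hδlip y x) hα0.le
          _ ≤ A + D := rpow_subadd (hδnn x) hd.le hα0.le hα1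
      have hbB : B ≤ b + D := by
        calc B ≤ (ρ y + dist x y) ^ α :=
              Real.rpow_le_rpow (hρnn x) (hρlip x y) hα0.le
          _ = (ρ y + dist y x) ^ α := by rw [dist_comm]
          _ ≤ b + D := rpow_subadd (hρnn y) hd.le hα0.le hα1
      have key : a / (a + b) ≤ (A + D) / (A + B) := by
        rw [div_le_div_iff₀ hab hAB]
        nlinarith [mul_nonneg (sub_nonneg.2 ha) hb0,
          mul_nonneg ha0.le (by linarith : (0:ℝ) ≤ b + D - B)]
      have huy : u y = a / (a + b) := by rw [hu]; simp [hyΩ, a, b]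
      have h2 : u y - u x ≤ D / (A + B) := by
        have hsplit : (A + D) / (A + B) = A / (A + B) + D / (A + B) := by
          rw [add_div]
        rw [huy, hux]; linarith [key]
      have h3 : (u y - u x) * (A + B) ≤ D := (le_div_iff₀ hAB).1 h2
      rw [div_le_div_iff₀ hD hAB, one_mul]
      exact h3
    · have huy : u y = 0 := by rw [hu]; simp [hyΩ]
      have hux0 : 0 ≤ u x := by rw [hux]; positivity
      have h1 : (u y - u x) / D ≤ 0 :=
        div_nonpos_of_nonpos_of_nonneg (by linarith) hD.le
      exact h1.trans (by positivity)
  · intro y hyΓ hdist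
    have hyΓ' : y ∈ Ω ∧ δ y = R := by rw [hΓ] at hyΓ; exact hyΓ
    have hρy : ρ y = 0 := by rw [hρ]; exact Metric.infDist_zero_of_mem hyΓ
    have huy : u y = 1 := by
      rw [hu]
      simp only [hyΓ'.1, if_true, hyΓ'.2, hρy, Real.zero_rpow hα0.ne', add_zero]
      exact div_self (Real.rpow_pos_of_pos hR0 α).ne'
    have hdyx : dist y x = ρ x := by rw [dist_comm]; exact hdist
    rw [huy, hux, hdyx]
    rw [show (1:ℝ) - A / (A + B) = B / (A + B) by field_simp; ring]
    rw [div_div, mul_comm, ← div_div, div_self hB.ne']
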